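/- For every θ ∈ (0, π), the real integral ∫_{−1}^{0} 1/((1 − w) · √(w² − 2 w cos θ + 1)) dw equals (1/(4 sin(θ/2))) · log((1 + sin(θ/2))/(1 − sin(θ/2))). -/

import Mathlib

open Real Set intervalIntegral

/-- Evaluation of the integral `∫_{-1}^{0} dw / ((1-w) √(w² - 2w cos θ + 1))`. -/
theorem integral_eval (θ : ℝ) (hθ : θ ∈ Set.Ioo 0 π) :
    ∫ w in (-1 : ℝ)..0, 1 / ((1 - w) * Real.sqrt (w ^ 2 - 2 * w * Real.cos θ + 1)) =
      (1 / (4 * Real.sin (θ / 2))) *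
        Real.log ((1 + Real.sin (θ / 2)) / (1 - Real.sin (θ / 2))) := by
  obtain ⟨hθ0, hθπ⟩ := hθ
  set s := Real.sin (θ / 2) with hs_def
  set c := Real.cos (θ / 2) with hc_def
  have hs : 0 < s := Real.sin_pos_of_pos_of_lt_pi (by linarith) (by linarith [Real.pi_pos])
  have hc : 0 < c := Real.cos_pos_of_mem_Ioo ⟨by linarith [Real.pi_pos], by linarith⟩
  have hsc : s ^ 2 + c ^ 2 = 1 := Real.sin_sq_add_cos_sq _
  have hs1 : s < 1 := by nlinarith
  have hcos : Real.cos θ = 1 - 2 * s ^ 2 := by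
    have h := Real.cos_sq (θ / 2)
    have h2 : 2 * (θ / 2) = θ := by ring
    rw [h2] at h
    nlinarith
  -- positivity of the quadratic on [-1, 0]
  have hQpos : ∀ w ∈ Set.Icc (-1 : ℝ) 0, 0 < w ^ 2 - 2 * w * Real.cos θ + 1 := by
    intro w ⟨hw1, hw2⟩
    rw [hcos]
    nlinarith [sq_nonneg (1 + w), sq_nonneg w, mul_nonneg (neg_nonneg.mpr hw2) (sq_nonneg c)]
  set F : ℝ → ℝ := fun w =>
    (1 / (2 * s)) * (Real.log (Real.sqrt (w ^ 2 - 2 * w * Real.cos θ + 1) + s * (1 + w))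
      - Real.log (1 - w)) with hF_def
  have key : ∀ w ∈ Set.Icc (-1 : ℝ) 0,
      HasDerivAt F (1 / ((1 - w) * Real.sqrt (w ^ 2 - 2 * w * Real.cos θ + 1))) w := by
    intro w hw
    obtain ⟨hw1, hw2⟩ := hw
    have hQ : 0 < w ^ 2 - 2 * w * Real.cos θ + 1 := hQpos w ⟨hw1, hw2⟩
    set q := Real.sqrt (w ^ 2 - 2 * w * Real.cos θ + 1) with hq_def
    have hq : 0 < q := Real.sqrt_pos.mpr hQ
    have hq2 : q ^ 2 = w ^ 2 - 2 * w * Real.cos θ + 1 := Real.sq_sqrt hQ.le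
    have hN : 0 < q + s * (1 + w) :=
      add_pos_of_pos_of_nonneg hq (mul_nonneg hs.le (by linarith))
    have h1w : 0 < 1 - w := by linarith
    have hQ' : HasDerivAt (fun w : ℝ => w ^ 2 - 2 * w * Real.cos θ + 1)
        (2 * w - 2 * Real.cos θ) w := by
      have h1 : HasDerivAt (fun w : ℝ => w ^ 2) (2 * w) w := by
        simpa using hasDerivAt_pow 2 w
      have h2 : HasDerivAt (fun w : ℝ => 2 * w * Real.cos θ) (2 * Real.cos θ) w := by
        have h3 := ((hasDerivAt_id w).const_mul 2).mul_const (Real.cos θ)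
        simpa using h3
      simpa using (h1.sub h2).add_const 1
    have hsqrt : HasDerivAt (fun w : ℝ => Real.sqrt (w ^ 2 - 2 * w * Real.cos θ + 1))
        ((2 * w - 2 * Real.cos θ) / (2 * q)) w := hQ'.sqrt hQ.ne'
    have hNder : HasDerivAt (fun w : ℝ => Real.sqrt (w ^ 2 - 2 * w * Real.cos θ + 1) + s * (1 + w))
        ((2 * w - 2 * Real.cos θ) / (2 * q) + s) w := by
      have h3 : HasDerivAt (fun w : ℝ => s * (1 + w)) s w := by
        have := ((hasDerivAt_id w).const_add 1).const_mul s
        simpa using this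
      exact hsqrt.add h3
    have hlogN : HasDerivAt
        (fun w : ℝ => Real.log (Real.sqrt (w ^ 2 - 2 * w * Real.cos θ + 1) + s * (1 + w)))
        (((2 * w - 2 * Real.cos θ) / (2 * q) + s) / (q + s * (1 + w))) w :=
      hNder.log hN.ne'
    have hlog1w : HasDerivAt (fun w : ℝ => Real.log (1 - w)) ((-1) / (1 - w)) w := by
      have h4 : HasDerivAt (fun w : ℝ => 1 - w) (-1) w := by
        simpa using (hasDerivAt_id w).const_sub 1
      exact h4.log h1w.ne'
    have := ((hlogN.sub hlog1w).const_mul (1 / (2 * s)))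
    refine this.congr_deriv ?_
    symm
    have hsne : s ≠ 0 := hs.ne'
    field_simp
    linear_combination (-1 : ℝ) * hq2 + (1 + w) * hcos
  have hle : (-1 : ℝ) ≤ 0 := by norm_num
  have huIcc : Set.uIcc (-1 : ℝ) 0 = Set.Icc (-1) 0 := Set.uIcc_of_le hle
  have hInt : IntervalIntegrable
      (fun w => 1 / ((1 - w) * Real.sqrt (w ^ 2 - 2 * w * Real.cos θ + 1)))
      MeasureTheory.volume (-1) 0 := by
    apply ContinuousOn.intervalIntegrable
    rw [huIcc]
    apply ContinuousOn.div continuousOn_const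
    · exact (continuousOn_const.sub continuousOn_id).mul
        (Real.continuous_sqrt.comp_continuousOn (by fun_prop))
    · intro w hw
      have hQ := hQpos w hw
      have h1w : (0 : ℝ) < 1 - w := by
        have := hw.2
        linarith
      exact mul_ne_zero h1w.ne' (Real.sqrt_pos.mpr hQ).ne'
  rw [intervalIntegral.integral_eq_sub_of_hasDerivAt
    (fun x hx => key x (by rwa [huIcc] at hx)) hInt]
  have hF0 : F 0 = (1 / (2 * s)) * Real.log (1 + s) := by
    have h1 : (0 : ℝ) ^ 2 - 2 * 0 * Real.cos θ + 1 = 1 := by ring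
    simp [hF_def, h1, Real.sqrt_one, add_comm]
  have hFm1 : F (-1) = (1 / (2 * s)) * (Real.log (2 * c) - Real.log 2) := by
    have h1 : (-1 : ℝ) ^ 2 - 2 * (-1) * Real.cos θ + 1 = (2 * c) ^ 2 := by
      rw [hcos]; linear_combination (-4 : ℝ) * hsc
    have h2 : Real.sqrt (1 + 2 * Real.cos θ + 1) = 2 * c := by
      rw [show (1 : ℝ) + 2 * Real.cos θ + 1 = (2 * c) ^ 2 by linear_combination h1,
        Real.sqrt_sq (by positivity)]
    simp [hF_def, h2]
    norm_num
  rw [hF0, hFm1]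
  have hlog2c : Real.log (2 * c) = Real.log 2 + Real.log c :=
    Real.log_mul two_ne_zero hc.ne'
  have hlogdiv : Real.log ((1 + s) / (1 - s)) = 2 * (Real.log (1 + s) - Real.log c) := by
    have h1 : (1 + s) / (1 - s) = ((1 + s) / c) ^ 2 := by
      rw [div_pow, div_eq_div_iff (by linarith) (by positivity)]
      linear_combination (1 + s) * hsc
    rw [h1, Real.log_pow, Real.log_div (by positivity) hc.ne']
    push_cast; ring
  rw [hlog2c, hlogdiv]
  field_simp
  ring
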